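/- For the N-qubit one-axis twisted state |ψ⟩ = exp(-iθ J_x²/2)|1⟩^{⊗N} (N ≥ 2), one has ⟨σ_{1-}σ_{2-}⟩ = -(1 - cos^{N-2}θ)/8 - (i/2) sin(θ/2) cos^{N-2}(θ/2). -/

import Mathlib

open Matrix Complex Finset

noncomputable section OneAxisTwisting

/-- Pauli x matrix in the basis `{|0⟩, |1⟩}`. -/
def pauliX : Matrix (Fin 2) (Fin 2) ℂ := !![0, 1; 1, 0]

/-- Pauli z matrix in the basis `{|0⟩, |1⟩}`. -/
def pauliZ : Matrix (Fin 2) (Fin 2) ℂ := !![1, 0; 0, -1]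

/-- The single-qubit operator `m` acting on site `k` of `N` qubits (identity elsewhere),
as a matrix on the computational basis indexed by `Fin N → Fin 2`. -/
def siteOp (N : ℕ) (k : Fin N) (m : Matrix (Fin 2) (Fin 2) ℂ) :
    Matrix (Fin N → Fin 2) (Fin N → Fin 2) ℂ :=
  Matrix.of fun s t =>
    m (s k) (t k) * ∏ j ∈ Finset.univ.erase k, (if s j = t j then (1 : ℂ) else 0)

/-- The collective spin operator `J_x = (1/2) Σ_k σ_{k,x}`. -/
def Jx (N : ℕ) : Matrix (Fin N → Fin 2) (Fin N → Fin 2) ℂ :=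
  (1 / 2 : ℂ) • ∑ k : Fin N, siteOp N k pauliX

/-- The all-down state `|1⟩^{⊗N}` as a vector. -/
def allDown (N : ℕ) : (Fin N → Fin 2) → ℂ :=
  fun s => if s = (fun _ => 1) then 1 else 0

/-- The one-axis twisted state `exp(-iθ J_x²/2) |1⟩^{⊗N}`. -/
def oneAxisTwisted (N : ℕ) (θ : ℝ) : (Fin N → Fin 2) → ℂ :=
  (NormedSpace.exp ((-(θ / 2 : ℂ) * Complex.I) • (Jx N * Jx N))).mulVec (allDown N)

/-- Expectation value `⟨ψ|O|ψ⟩` in the one-axis twisted state. -/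
def expVal (N : ℕ) (θ : ℝ) (O : Matrix (Fin N → Fin 2) (Fin N → Fin 2) ℂ) : ℂ :=
  star (oneAxisTwisted N θ) ⬝ᵥ O.mulVec (oneAxisTwisted N θ)


/-- Lowering operator `σ₋ = (σ_x - iσ_y)/2 = |1⟩⟨0|`. -/
def pauliMinus : Matrix (Fin 2) (Fin 2) ℂ := !![0, 0; 1, 0]

namespace OAT

-- from stage 1 (assume compiled): restate minimal
def r2 : ℂ := (Real.sqrt 2 : ℝ)
lemma r2_sq : r2 * r2 = 2 := by
  unfold r2
  rw [← Complex.ofReal_mul, Real.mul_self_sqrt (by norm_num)]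
  norm_num
def hh : ℂ := r2 / 2
lemma hh_sq : hh * hh = 1/2 := by
  unfold hh; rw [div_mul_div_comm, r2_sq]; norm_num
def Had : Matrix (Fin 2) (Fin 2) ℂ := !![hh, hh; hh, -hh]
lemma Had_mul_Had : Had * Had = 1 := by
  ext i j
  fin_cases i <;> fin_cases j <;>
    simp [Had, Matrix.mul_apply, Fin.sum_univ_two, Matrix.one_apply] <;>
    · have := hh_sq; ring_nf; linear_combination 2 * hh_sq
def tOp (N : ℕ) (m : Fin N → Matrix (Fin 2) (Fin 2) ℂ) :
    Matrix (Fin N → Fin 2) (Fin N → Fin 2) ℂ :=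
  Matrix.of fun s t => ∏ j, m j (s j) (t j)
lemma tOp_apply (N : ℕ) (m : Fin N → Matrix (Fin 2) (Fin 2) ℂ) (s t : Fin N → Fin 2) :
    tOp N m s t = ∏ j, m j (s j) (t j) := rfl
lemma tOp_mul (N : ℕ) (m m' : Fin N → Matrix (Fin 2) (Fin 2) ℂ) :
    tOp N m * tOp N m' = tOp N (fun j => m j * m' j) := by
  ext s t
  simp only [Matrix.mul_apply, tOp_apply]
  rw [Fintype.prod_sum (fun j a => m j (s j) a * m' j a (t j))]
  exact Finset.sum_congr rfl fun u _ => (Finset.prod_mul_distrib).symm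
lemma prod_delta {q : ℕ} (r s : Fin q → Fin 2) :
    (∏ i, if r i = s i then (1:ℂ) else 0) = if r = s then 1 else 0 := by
  by_cases h : r = s
  · subst h; simp
  · rw [if_neg h]
    obtain ⟨i, hi⟩ := Function.ne_iff.mp h
    exact Finset.prod_eq_zero (Finset.mem_univ i) (if_neg hi)
lemma tOp_one (N : ℕ) : tOp N (fun _ => 1) = 1 := by
  ext s t
  simp only [tOp_apply, Matrix.one_apply]
  rw [prod_delta]

-- NEW STAGE 2
lemma siteOp_eq (N : ℕ) (k : Fin N) (m : Matrix (Fin 2) (Fin 2) ℂ) :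
    siteOp N k m = tOp N (fun j => if j = k then m else 1) := by
  ext s t
  simp only [siteOp, Matrix.of_apply, tOp_apply]
  rw [← Finset.mul_prod_erase Finset.univ _ (Finset.mem_univ k), if_pos rfl]
  congr 1
  refine Finset.prod_congr rfl fun j hj => ?_
  rw [if_neg (Finset.mem_erase.mp hj).1, Matrix.one_apply]

def W (N : ℕ) : Matrix (Fin N → Fin 2) (Fin N → Fin 2) ℂ := tOp N (fun _ => Had)

lemma W_mul_W (N : ℕ) : W N * W N = 1 := by
  rw [W, tOp_mul]
  simp only [Had_mul_Had]
  exact tOp_one N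

lemma W_conj_siteOp (N : ℕ) (k : Fin N) (m : Matrix (Fin 2) (Fin 2) ℂ) :
    W N * siteOp N k m * W N = siteOp N k (Had * m * Had) := by
  rw [siteOp_eq, siteOp_eq, W, tOp_mul, tOp_mul]
  refine congrArg (tOp N) (funext fun j => ?_)
  by_cases h : j = k
  · simp [h]
  · simp [h, Had_mul_Had]

lemma Had_conj_X : Had * pauliX * Had = pauliZ := by
  ext i j
  fin_cases i <;> fin_cases j <;>
    simp [Had, pauliX, pauliZ, Matrix.mul_apply, Fin.sum_univ_two] <;>
    first
      | linear_combination (2:ℂ) * hh_sq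
      | linear_combination (-2:ℂ) * hh_sq
      | linear_combination (4:ℂ) * hh_sq
      | linear_combination (-4:ℂ) * hh_sq
      | ring

def Mp : Matrix (Fin 2) (Fin 2) ℂ := !![1/2, 1/2; -(1/2), -(1/2)]

lemma Had_conj_minus : Had * pauliMinus * Had = Mp := by
  ext i j
  fin_cases i <;> fin_cases j <;>
    simp [Had, pauliMinus, Mp, Matrix.mul_apply, Fin.sum_univ_two] <;>
    first
      | linear_combination hh_sq
      | linear_combination (-1:ℂ) * hh_sq
      | linear_combination (2:ℂ) * hh_sq
      | linear_combination (-2:ℂ) * hh_sq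
      | ring

def zv : Fin 2 → ℂ := fun a => if a = 0 then 1 else -1

lemma siteZ_diag (N : ℕ) (k : Fin N) :
    siteOp N k pauliZ = Matrix.diagonal (fun s => zv (s k)) := by
  ext s t
  simp only [siteOp, Matrix.of_apply, Matrix.diagonal_apply]
  by_cases h : s = t
  · subst h
    rw [if_pos rfl]
    have h2 : (∏ j ∈ Finset.univ.erase k, if s j = s j then (1:ℂ) else 0) = 1 := by
      simp
    rw [h2, mul_one]
    have : s k = 0 ∨ s k = 1 := by omega
    rcases this with h | h <;> simp [h, pauliZ, zv]
  · rw [if_neg h]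
    by_cases hk : s k = t k
    · obtain ⟨j, hj⟩ := Function.ne_iff.mp h
      have hjk : j ≠ k := fun e => hj (e ▸ hk)
      have hz : (∏ j ∈ Finset.univ.erase k, if s j = t j then (1:ℂ) else 0) = 0 :=
        Finset.prod_eq_zero (Finset.mem_erase.mpr ⟨hjk, Finset.mem_univ j⟩)
          (by rw [if_neg hj])
      rw [hz, mul_zero]
    · have : pauliZ (s k) (t k) = 0 := by
        have h1 : s k = 0 ∨ s k = 1 := by omega
        have h2 : t k = 0 ∨ t k = 1 := by omega
        rcases h1 with h1 | h1 <;> rcases h2 with h2 | h2 <;>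
          simp [h1, h2, pauliZ] at hk ⊢
      rw [this, zero_mul]

def mval (N : ℕ) : (Fin N → Fin 2) → ℂ := fun s => (1/2 : ℂ) * ∑ j, zv (s j)

lemma W_Jx_W (N : ℕ) : W N * Jx N * W N = Matrix.diagonal (mval N) := by
  rw [Jx]
  rw [Matrix.mul_smul, Matrix.smul_mul, Finset.mul_sum, Finset.sum_mul]
  have : ∀ k : Fin N, W N * siteOp N k pauliX * W N = Matrix.diagonal (fun s => zv (s k)) := by
    intro k
    rw [W_conj_siteOp, Had_conj_X, siteZ_diag]
  simp only [this]
  have hsum : (∑ x : Fin N, Matrix.diagonal fun s : Fin N → Fin 2 => zv (s x))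
      = Matrix.diagonal (∑ x : Fin N, fun s : Fin N → Fin 2 => zv (s x)) :=
    (map_sum (Matrix.diagonalAddMonoidHom (Fin N → Fin 2) ℂ)
      (fun x => fun s : Fin N → Fin 2 => zv (s x)) Finset.univ).symm
  rw [hsum, ← Matrix.diagonal_smul]
  refine congrArg Matrix.diagonal (funext fun s => ?_)
  rw [Pi.smul_apply, Finset.sum_apply, smul_eq_mul, mval]

-- STAGE 3
def cC (θ : ℝ) : ℂ := -(θ/2 : ℂ) * Complex.I

def dvec (N : ℕ) (θ : ℝ) : (Fin N → Fin 2) → ℂ := fun s => Complex.exp (cC θ * (mval N s)^2)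

lemma conj_conj (N : ℕ) (A B : Matrix (Fin N → Fin 2) (Fin N → Fin 2) ℂ) :
    (W N * A * W N) * (W N * B * W N) = W N * (A * B) * W N := by
  have h := W_mul_W N
  calc (W N * A * W N) * (W N * B * W N)
      = W N * (A * ((W N * W N) * (B * W N))) := by simp only [Matrix.mul_assoc]
    _ = W N * (A * B) * W N := by rw [h, Matrix.one_mul]; simp only [Matrix.mul_assoc]

lemma Jx_eq (N : ℕ) : Jx N = W N * Matrix.diagonal (mval N) * W N := by
  have h := W_Jx_W N
  have hw := W_mul_W N
  calc Jx N = (W N * W N) * Jx N * (W N * W N) := by rw [hw, Matrix.one_mul, Matrix.mul_one]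
    _ = W N * (W N * Jx N * W N) * W N := by simp only [Matrix.mul_assoc]
    _ = _ := by rw [h]

lemma exp_eq (N : ℕ) (θ : ℝ) :
    NormedSpace.exp ((-(θ / 2 : ℂ) * Complex.I) • (Jx N * Jx N))
      = W N * Matrix.diagonal (dvec N θ) * W N := by
  have hw := W_mul_W N
  have hinv : (W N)⁻¹ = W N := Matrix.inv_eq_right_inv hw
  have hu : IsUnit (W N) := ⟨⟨W N, W N, hw, hw⟩, rfl⟩
  have hd : Matrix.diagonal (mval N) * Matrix.diagonal (mval N)
      = Matrix.diagonal (fun s => (mval N s)^2) := by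
    rw [Matrix.diagonal_mul_diagonal]
    exact congrArg _ (funext fun s => (sq (mval N s)).symm)
  have h1 : Jx N * Jx N = W N * Matrix.diagonal (fun s => (mval N s)^2) * W N := by
    rw [Jx_eq, conj_conj, hd]
  have hsm : (fun s : Fin N → Fin 2 => cC θ * (mval N s)^2)
      = cC θ • (fun s => (mval N s)^2) := rfl
  have h2 : (-(θ / 2 : ℂ) * Complex.I) • (Jx N * Jx N)
      = W N * Matrix.diagonal (fun s => cC θ * (mval N s)^2) * (W N)⁻¹ := by
    rw [hinv, h1, hsm, Matrix.diagonal_smul, mul_smul_comm, Matrix.smul_mul]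
    rfl
  rw [h2, Matrix.exp_conj (W N) _ hu, Matrix.exp_diagonal, hinv]
  have h3 : Matrix.diagonal (NormedSpace.exp fun s : Fin N → Fin 2 => cC θ * mval N s ^ 2)
      = Matrix.diagonal (dvec N θ) := by
    refine congrArg _ ?_
    rw [Pi.exp_def]
    exact funext fun s => (congrFun Complex.exp_eq_exp_ℂ _).symm
  rw [h3]

def vOne (N : ℕ) : Fin N → Fin 2 := fun _ => 1

lemma star_hh : star hh = hh := by
  unfold hh r2
  rw [star_div₀]
  norm_num [Complex.star_def, Complex.conj_ofReal]

lemma Had_conjT : Hadᴴ = Had := by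
  ext i j
  fin_cases i <;> fin_cases j <;>
    simp [Had, Matrix.conjTranspose_apply, star_hh, star_neg]

lemma tOp_conjT (N : ℕ) (m : Fin N → Matrix (Fin 2) (Fin 2) ℂ) :
    (tOp N m)ᴴ = tOp N (fun j => (m j)ᴴ) := by
  ext s t
  simp only [Matrix.conjTranspose_apply, tOp_apply, star_prod]

lemma W_conjT (N : ℕ) : (W N)ᴴ = W N := by
  rw [W, tOp_conjT]
  exact congrArg (tOp N) (funext fun _ => Had_conjT)

lemma star_allDown (N : ℕ) : star (allDown N) = allDown N := by
  funext s
  simp [allDown, Pi.star_apply, apply_ite]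

lemma quad_entry (N : ℕ) (A : Matrix (Fin N → Fin 2) (Fin N → Fin 2) ℂ) :
    (Matrix.vecMul (allDown N) A) ⬝ᵥ allDown N = A (vOne N) (vOne N) := by
  have h1 : allDown N = fun s => if s = vOne N then (1:ℂ) else 0 := rfl
  rw [h1]
  simp [Matrix.vecMul, dotProduct, ite_mul, one_mul, zero_mul,
    Finset.sum_ite_eq, Finset.sum_ite_eq']

lemma expVal_eq (N : ℕ) (θ : ℝ) (B : Matrix (Fin N → Fin 2) (Fin N → Fin 2) ℂ) :
    expVal N θ B = (W N * ((Matrix.diagonal fun s => star (dvec N θ s)) * (W N * B * W N) *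
      Matrix.diagonal (dvec N θ)) * W N) (vOne N) (vOne N) := by
  set M := W N * Matrix.diagonal (dvec N θ) * W N with hMdef
  have hM : oneAxisTwisted N θ = M.mulVec (allDown N) := by
    rw [oneAxisTwisted, exp_eq]
  have hMH : Mᴴ = W N * (Matrix.diagonal fun s => star (dvec N θ s)) * W N := by
    rw [hMdef]
    simp only [Matrix.conjTranspose_mul, W_conjT, Matrix.diagonal_conjTranspose]
    simp only [Matrix.mul_assoc]
    rfl
  have key : Mᴴ * B * M = W N * ((Matrix.diagonal fun s => star (dvec N θ s)) * (W N * B * W N) *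
      Matrix.diagonal (dvec N θ)) * W N := by
    have hB : B = W N * (W N * B * W N) * W N := by
      have hw := W_mul_W N
      calc B = (W N * W N) * B * (W N * W N) := by rw [hw, Matrix.one_mul, Matrix.mul_one]
        _ = _ := by simp only [Matrix.mul_assoc]
    rw [hMH, hMdef]
    conv_lhs => rw [hB]
    rw [conj_conj, conj_conj]
  rw [expVal, hM, Matrix.star_mulVec, star_allDown, Matrix.dotProduct_mulVec,
    Matrix.vecMul_vecMul, Matrix.dotProduct_mulVec, Matrix.vecMul_vecMul, quad_entry, key]

-- STAGE 4a
lemma W_apply (N : ℕ) (s t : Fin N → Fin 2) : W N s t = ∏ j, Had (s j) (t j) := rfl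

def s0 (q : ℕ) : Fin (2+q) := finSumFinEquiv (Sum.inl 0)
def s1 (q : ℕ) : Fin (2+q) := finSumFinEquiv (Sum.inl 1)

lemma s0_ne_s1 (q : ℕ) : s0 q ≠ s1 q :=
  fun h => by simpa using finSumFinEquiv.injective h

def PP (q : ℕ) : Fin (2+q) → Matrix (Fin 2) (Fin 2) ℂ :=
  fun j => if j = s0 q then Mp else if j = s1 q then Mp else 1

lemma PP_s0 (q : ℕ) : PP q (s0 q) = Mp := if_pos rfl

lemma PP_s1 (q : ℕ) : PP q (s1 q) = Mp := by
  rw [PP, if_neg (Ne.symm (s0_ne_s1 q)), if_pos rfl]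

lemma PP_inr (q : ℕ) (i : Fin q) : PP q (finSumFinEquiv (Sum.inr i)) = 1 := by
  have h0 : finSumFinEquiv (Sum.inr i) ≠ s0 q :=
    fun h => by simpa using finSumFinEquiv.injective h
  have h1 : finSumFinEquiv (Sum.inr i) ≠ s1 q :=
    fun h => by simpa using finSumFinEquiv.injective h
  rw [PP, if_neg h0, if_neg h1]

lemma WBW (q : ℕ) :
    W (2+q) * (siteOp (2+q) (s0 q) pauliMinus * siteOp (2+q) (s1 q) pauliMinus) * W (2+q)
      = tOp (2+q) (PP q) := by
  rw [← conj_conj (2+q) (siteOp _ (s0 q) pauliMinus) (siteOp _ (s1 q) pauliMinus),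
    W_conj_siteOp, W_conj_siteOp, Had_conj_minus, siteOp_eq, siteOp_eq, tOp_mul]
  refine congrArg (tOp _) (funext fun j => ?_)
  rw [PP]
  by_cases h0 : j = s0 q
  · subst h0; simp [s0_ne_s1 q]
  · by_cases h1 : j = s1 q <;> simp [h0, h1, Ne.symm (s0_ne_s1 q)]

lemma diag_sandwich (N : ℕ) (f g : (Fin N → Fin 2) → ℂ)
    (A : Matrix (Fin N → Fin 2) (Fin N → Fin 2) ℂ) (u v : Fin N → Fin 2) :
    (Matrix.diagonal f * A * Matrix.diagonal g) u v = f u * A u v * g v := by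
  rw [Matrix.mul_diagonal, Matrix.diagonal_mul]

lemma sandwich_entry (N : ℕ) (C : Matrix (Fin N → Fin 2) (Fin N → Fin 2) ℂ)
    (a b : Fin N → Fin 2) :
    (W N * C * W N) a b
      = ∑ u, ∑ v, (∏ j, Had (a j) (u j)) * C u v * (∏ j, Had (v j) (b j)) := by
  simp only [Matrix.mul_apply, Finset.sum_mul]
  rw [Finset.sum_comm]
  refine Finset.sum_congr rfl fun u _ => Finset.sum_congr rfl fun v _ => ?_
  rw [W_apply, W_apply]

-- STAGE 4b
def EE (q : ℕ) : ((Fin 2 → Fin 2) × (Fin q → Fin 2)) ≃ (Fin (2+q) → Fin 2) :=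
  (Equiv.sumArrowEquivProdArrow (Fin 2) (Fin q) (Fin 2)).symm.trans
    (Equiv.arrowCongr finSumFinEquiv (Equiv.refl (Fin 2)))

lemma EE_inl (q : ℕ) (a : Fin 2 → Fin 2) (r : Fin q → Fin 2) (i : Fin 2) :
    EE q (a, r) (finSumFinEquiv (Sum.inl i)) = a i := by
  simp [EE, Equiv.sumArrowEquivProdArrow, Equiv.arrowCongr]

lemma EE_inr (q : ℕ) (a : Fin 2 → Fin 2) (r : Fin q → Fin 2) (i : Fin q) :
    EE q (a, r) (finSumFinEquiv (Sum.inr i)) = r i := by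
  simp [EE, Equiv.sumArrowEquivProdArrow, Equiv.arrowCongr]

lemma prod_split (q : ℕ) (f : Fin (2+q) → ℂ) :
    (∏ j, f j) = (∏ i : Fin 2, f (finSumFinEquiv (Sum.inl i)))
      * ∏ i : Fin q, f (finSumFinEquiv (Sum.inr i)) := by
  rw [← finSumFinEquiv.prod_comp f, Fintype.prod_sum_type]

lemma sum_split (q : ℕ) (f : Fin (2+q) → ℂ) :
    (∑ j, f j) = (∑ i : Fin 2, f (finSumFinEquiv (Sum.inl i)))
      + ∑ i : Fin q, f (finSumFinEquiv (Sum.inr i)) := by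
  rw [← finSumFinEquiv.sum_comp f, Fintype.sum_sum_type]

def hd (a : Fin 2 → Fin 2) : ℂ := (zv (a 0) + zv (a 1)) / 2

def tl {q : ℕ} (r : Fin q → Fin 2) : ℂ := (1/2 : ℂ) * ∑ i, zv (r i)

lemma mval_split (q : ℕ) (a : Fin 2 → Fin 2) (r : Fin q → Fin 2) :
    mval (2+q) (EE q (a, r)) = hd a + tl r := by
  rw [mval, sum_split]
  simp only [EE_inl, EE_inr]
  rw [Fin.sum_univ_two, hd, tl]
  ring

lemma star_zv (x : Fin 2) : star (zv x) = zv x := by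
  have : x = 0 ∨ x = 1 := by omega
  rcases this with h | h <;> simp [h, zv]

lemma star_hd (a : Fin 2 → Fin 2) : star (hd a) = hd a := by
  rw [hd, star_div₀, star_add, star_zv, star_zv]
  norm_num

lemma star_tl {q : ℕ} (r : Fin q → Fin 2) : star (tl r) = tl r := by
  rw [tl, star_mul', star_sum]
  simp only [star_zv]
  norm_num

lemma star_cC (θ : ℝ) : star (cC θ) = -cC θ := by
  simp [cC, Complex.star_def, _root_.map_mul, Complex.conj_ofReal]

lemma star_dvec (q : ℕ) (θ : ℝ) (a : Fin 2 → Fin 2) (r : Fin q → Fin 2) :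
    star (dvec (2+q) θ (EE q (a, r))) = Complex.exp (-(cC θ * (hd a + tl r)^2)) := by
  rw [dvec, mval_split, Complex.star_def, ← Complex.exp_conj]
  congr 1
  rw [_root_.map_mul, map_pow, map_add]
  show star (cC θ) * (star (hd a) + star (tl r))^2 = _
  rw [star_cC, star_hd, star_tl]
  ring

lemma dvec_split (q : ℕ) (θ : ℝ) (b : Fin 2 → Fin 2) (r : Fin q → Fin 2) :
    dvec (2+q) θ (EE q (b, r)) = Complex.exp (cC θ * (hd b + tl r)^2) := by
  rw [dvec, mval_split]

-- STAGE 4c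
def gg (θ : ℝ) (Δ : ℂ) : ℂ := (Complex.exp (cC θ * Δ) + Complex.exp (-(cC θ * Δ))) / 2

def KK (a b : Fin 2 → Fin 2) : ℂ :=
  Had 1 (a 0) * Had 1 (a 1) * (Mp (a 0) (b 0) * Mp (a 1) (b 1)) * (Had (b 0) 1 * Had (b 1) 1)

def GG (θ : ℝ) {q : ℕ} (a b : Fin 2 → Fin 2) (r : Fin q → Fin 2) : ℂ :=
  KK a b * ((∏ i, (Had 1 (r i) * Had (r i) 1)) *
    (Complex.exp (-(cC θ * (hd a + tl r)^2)) * Complex.exp (cC θ * (hd b + tl r)^2)))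

lemma key_term (q : ℕ) (θ : ℝ) (a b : Fin 2 → Fin 2) (r s : Fin q → Fin 2) :
    (∏ j, Had (vOne (2+q) j) (EE q (a, r) j)) *
      (star (dvec (2+q) θ (EE q (a, r))) *
        (∏ j, PP q j (EE q (a, r) j) (EE q (b, s) j)) * dvec (2+q) θ (EE q (b, s))) *
      (∏ j, Had (EE q (b, s) j) (vOne (2+q) j))
    = (if r = s then 1 else 0) * GG θ a b r := by
  have hP : (∏ j, PP q j (EE q (a, r) j) (EE q (b, s) j))
      = (Mp (a 0) (b 0) * Mp (a 1) (b 1)) * (if r = s then 1 else 0) := by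
    rw [prod_split]
    congr 1
    · rw [Fin.prod_univ_two]
      rw [show finSumFinEquiv (Sum.inl (0 : Fin 2)) = s0 q from rfl,
        show finSumFinEquiv (Sum.inl (1 : Fin 2)) = s1 q from rfl, PP_s0, PP_s1]
      rw [show s0 q = finSumFinEquiv (Sum.inl (0 : Fin 2)) from rfl,
        show s1 q = finSumFinEquiv (Sum.inl (1 : Fin 2)) from rfl]
      simp only [EE_inl]
    · rw [← prod_delta r s]
      refine Finset.prod_congr rfl fun i _ => ?_
      rw [PP_inr, EE_inr, EE_inr, Matrix.one_apply]
  have hA : (∏ j, Had (vOne (2+q) j) (EE q (a, r) j))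
      = (Had 1 (a 0) * Had 1 (a 1)) * ∏ i, Had 1 (r i) := by
    rw [prod_split]
    congr 1
    · rw [Fin.prod_univ_two]
      simp only [EE_inl, vOne]
    · refine Finset.prod_congr rfl fun i _ => ?_
      rw [EE_inr, vOne]
  have hB : (∏ j, Had (EE q (b, s) j) (vOne (2+q) j))
      = (Had (b 0) 1 * Had (b 1) 1) * ∏ i, Had (s i) 1 := by
    rw [prod_split]
    congr 1
    · rw [Fin.prod_univ_two]
      simp only [EE_inl, vOne]
    · refine Finset.prod_congr rfl fun i _ => ?_
      rw [EE_inr, vOne]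
  rw [hP, hA, hB, star_dvec, dvec_split]
  by_cases hrs : r = s
  · subst hrs
    simp only [if_pos rfl, GG, KK, Finset.prod_mul_distrib]
    ring
  · simp only [if_neg hrs]
    ring

lemma inner_sum (q : ℕ) (θ : ℝ) (a b : Fin 2 → Fin 2) :
    (∑ r : Fin q → Fin 2, GG θ a b r)
      = KK a b * (Complex.exp (cC θ * ((hd b)^2 - (hd a)^2)) * (gg θ (hd b - hd a))^q) := by
  simp only [GG]
  rw [← Finset.mul_sum]
  congr 1
  have hpt : ∀ r : Fin q → Fin 2,
      (∏ i, (Had 1 (r i) * Had (r i) 1)) *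
        (Complex.exp (-(cC θ * (hd a + tl r)^2)) * Complex.exp (cC θ * (hd b + tl r)^2))
      = Complex.exp (cC θ * ((hd b)^2 - (hd a)^2)) *
          ∏ i, (Had 1 (r i) * Had (r i) 1 * Complex.exp (cC θ * (hd b - hd a) * zv (r i))) := by
    intro r
    have h2tl : (2:ℂ) * tl r = ∑ i, zv (r i) := by rw [tl]; ring
    have harg : -(cC θ * (hd a + tl r)^2) + cC θ * (hd b + tl r)^2
        = cC θ * ((hd b)^2 - (hd a)^2) + ∑ i, cC θ * (hd b - hd a) * zv (r i) := by
      rw [← Finset.mul_sum, ← h2tl]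
      ring
    rw [← Complex.exp_add, harg, Complex.exp_add, Complex.exp_sum]
    conv_rhs => rw [Finset.prod_mul_distrib]
    ring
  calc (∑ r : Fin q → Fin 2, (∏ i, (Had 1 (r i) * Had (r i) 1)) *
        (Complex.exp (-(cC θ * (hd a + tl r)^2)) * Complex.exp (cC θ * (hd b + tl r)^2)))
      = ∑ r : Fin q → Fin 2, Complex.exp (cC θ * ((hd b)^2 - (hd a)^2)) *
          ∏ i, (Had 1 (r i) * Had (r i) 1 * Complex.exp (cC θ * (hd b - hd a) * zv (r i))) :=
        Finset.sum_congr rfl fun r _ => hpt r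
    _ = Complex.exp (cC θ * ((hd b)^2 - (hd a)^2)) *
          ∑ r : Fin q → Fin 2,
            ∏ i, (Had 1 (r i) * Had (r i) 1 * Complex.exp (cC θ * (hd b - hd a) * zv (r i))) := by
        rw [Finset.mul_sum]
    _ = _ := by
        congr 1
        rw [← Fintype.sum_pow (fun x : Fin 2 => Had 1 x * Had x 1 *
          Complex.exp (cC θ * (hd b - hd a) * zv x)) q]
        congr 1
        rw [Fin.sum_univ_two]
        have e0 : Had 1 0 = hh := rfl
        have e1 : Had 0 1 = hh := rfl
        have e2 : Had 1 1 = -hh := rfl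
        rw [e0, e1, e2, gg]
        have z0 : zv 0 = 1 := rfl
        have z1 : zv 1 = -1 := rfl
        rw [z0, z1, mul_one]
        rw [show cC θ * (hd b - hd a) * (-1) = -(cC θ * (hd b - hd a)) by ring]
        linear_combination (Complex.exp (cC θ * (hd b - hd a)) +
          Complex.exp (-(cC θ * (hd b - hd a)))) * hh_sq

lemma entry_big (q : ℕ) (θ : ℝ) :
    (W (2+q) * ((Matrix.diagonal fun s => star (dvec (2+q) θ s)) * tOp (2+q) (PP q) *
      Matrix.diagonal (dvec (2+q) θ)) * W (2+q)) (vOne (2+q)) (vOne (2+q))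
    = ∑ a : Fin 2 → Fin 2, ∑ b : Fin 2 → Fin 2,
        KK a b * (Complex.exp (cC θ * ((hd b)^2 - (hd a)^2)) * (gg θ (hd b - hd a))^q) := by
  rw [sandwich_entry]
  simp only [diag_sandwich]
  calc (∑ u, ∑ v, (∏ j, Had (vOne (2+q) j) (u j)) *
        (star (dvec (2+q) θ u) * (tOp (2+q) (PP q)) u v * dvec (2+q) θ v) *
        (∏ j, Had (v j) (vOne (2+q) j)))
      = ∑ p : (Fin 2 → Fin 2) × (Fin q → Fin 2),
          ∑ p' : (Fin 2 → Fin 2) × (Fin q → Fin 2),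
          (∏ j, Had (vOne (2+q) j) (EE q p j)) *
          (star (dvec (2+q) θ (EE q p)) *
            (tOp (2+q) (PP q)) (EE q p) (EE q p') * dvec (2+q) θ (EE q p')) *
          (∏ j, Had (EE q p' j) (vOne (2+q) j)) := by
        rw [← Equiv.sum_comp (EE q)]
        exact Finset.sum_congr rfl fun p _ => (Equiv.sum_comp (EE q) _).symm
    _ = ∑ a : Fin 2 → Fin 2, ∑ r : Fin q → Fin 2, ∑ b : Fin 2 → Fin 2, ∑ s : Fin q → Fin 2,
          (if r = s then 1 else 0) * GG θ a b r := by
        rw [Fintype.sum_prod_type]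
        refine Finset.sum_congr rfl fun a _ => ?_
        refine Finset.sum_congr rfl fun r _ => ?_
        rw [Fintype.sum_prod_type]
        refine Finset.sum_congr rfl fun b _ => ?_
        refine Finset.sum_congr rfl fun s _ => ?_
        rw [tOp_apply]
        exact key_term q θ a b r s
    _ = ∑ a : Fin 2 → Fin 2, ∑ r : Fin q → Fin 2, ∑ b : Fin 2 → Fin 2, GG θ a b r := by
        refine Finset.sum_congr rfl fun a _ => Finset.sum_congr rfl fun r _ =>
          Finset.sum_congr rfl fun b _ => ?_
        simp only [ite_mul, one_mul, zero_mul]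
        rw [Finset.sum_ite_eq]
        simp
    _ = ∑ a : Fin 2 → Fin 2, ∑ b : Fin 2 → Fin 2, ∑ r : Fin q → Fin 2, GG θ a b r := by
        refine Finset.sum_congr rfl fun a _ => ?_
        rw [Finset.sum_comm]
    _ = _ := by
        refine Finset.sum_congr rfl fun a _ => Finset.sum_congr rfl fun b _ => ?_
        rw [inner_sum]

-- STAGE 5
lemma sum_funtwo (f : (Fin 2 → Fin 2) → ℂ) :
    (∑ a, f a) = f ![0,0] + f ![0,1] + f ![1,0] + f ![1,1] := by
  rw [← Equiv.sum_comp (piFinTwoEquiv (fun _ : Fin 2 => Fin 2)).symm f,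
    Fintype.sum_prod_type]
  simp only [Fin.sum_univ_two]
  have e : ∀ x y : Fin 2,
      (piFinTwoEquiv (fun _ : Fin 2 => Fin 2)).symm (x, y) = ![x, y] := by
    intro x y; funext i; fin_cases i <;> rfl
  rw [e, e, e, e]
  ring

lemma final_sum (q : ℕ) (θ : ℝ) :
    (∑ a : Fin 2 → Fin 2, ∑ b : Fin 2 → Fin 2,
        KK a b * (Complex.exp (cC θ * ((hd b)^2 - (hd a)^2)) * (gg θ (hd b - hd a))^q))
    = -((1 - ((Real.cos θ : ℂ)) ^ q) / 8) -
        (Complex.I / 2) * (Real.sin (θ / 2) : ℂ) * ((Real.cos (θ / 2) : ℂ)) ^ q := by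
  rw [sum_funtwo]
  simp only [sum_funtwo]
  norm_num [KK, hd, zv, Had, Mp]
  have hc : cC θ = (-((θ:ℂ)/2)) * Complex.I := rfl
  have hg0 : gg θ 0 = 1 := by simp [gg]
  have hg1 : gg θ 1 = Complex.cos ((θ:ℂ)/2) := by
    rw [gg, mul_one, hc, show -((-((θ:ℂ)/2)) * Complex.I) = ((θ:ℂ)/2) * Complex.I by ring,
      Complex.exp_mul_I, Complex.exp_mul_I, Complex.cos_neg, Complex.sin_neg]
    ring
  have hgm1 : gg θ (-1) = Complex.cos ((θ:ℂ)/2) := by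
    rw [gg, show cC θ * (-1) = ((θ:ℂ)/2) * Complex.I by rw [hc]; ring,
      show -(((θ:ℂ)/2) * Complex.I) = (-((θ:ℂ)/2)) * Complex.I by ring,
      Complex.exp_mul_I, Complex.exp_mul_I, Complex.cos_neg, Complex.sin_neg]
    ring
  have hg2 : gg θ 2 = Complex.cos (θ:ℂ) := by
    rw [gg, show cC θ * 2 = (-(θ:ℂ)) * Complex.I by rw [hc]; ring,
      show -((-(θ:ℂ)) * Complex.I) = ((θ:ℂ)) * Complex.I by ring,
      Complex.exp_mul_I, Complex.exp_mul_I, Complex.cos_neg, Complex.sin_neg]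
    ring
  have hgm2 : gg θ (-2) = Complex.cos (θ:ℂ) := by
    rw [gg, show cC θ * (-2) = ((θ:ℂ)) * Complex.I by rw [hc]; ring,
      show -(((θ:ℂ)) * Complex.I) = (-(θ:ℂ)) * Complex.I by ring,
      Complex.exp_mul_I, Complex.exp_mul_I, Complex.cos_neg, Complex.sin_neg]
    ring
  have h16 : hh * hh * (1/4 : ℂ) * (hh * hh) = 1/16 := by
    linear_combination ((hh*hh)/4 + 1/8) * hh_sq
  have hEF : Complex.exp (cC θ) - Complex.exp (-cC θ)
      = -2 * Complex.I * Complex.sin ((θ:ℂ)/2) := by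
    rw [hc, show -((-((θ:ℂ)/2)) * Complex.I) = ((θ:ℂ)/2) * Complex.I by ring,
      Complex.exp_mul_I, Complex.exp_mul_I, Complex.cos_neg, Complex.sin_neg]
    ring
  rw [hg0, hg1, hgm1, hg2, hgm2, h16]
  linear_combination ((Complex.cos ((θ:ℂ)/2))^q / 4) * hEF

end OAT

open OAT in
/-- For the one-axis twisted state on `N ≥ 2` qubits,
`⟨σ_{1-} σ_{2-}⟩ = -(1 - cos^{N-2} θ)/8 - (i/2) sin(θ/2) cos^{N-2}(θ/2)`. -/
theorem oneAxisTwisted_sigma_mm (N : ℕ) (hN : 2 ≤ N) (θ : ℝ) :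
    expVal N θ (siteOp N ⟨0, by omega⟩ pauliMinus * siteOp N ⟨1, by omega⟩ pauliMinus) =
      -((1 - ((Real.cos θ : ℂ)) ^ (N - 2)) / 8) -
        (Complex.I / 2) * (Real.sin (θ / 2) : ℂ) * ((Real.cos (θ / 2) : ℂ)) ^ (N - 2) := by
  obtain ⟨q, rfl⟩ : ∃ q, N = 2 + q := ⟨N - 2, by omega⟩
  have h0 : (⟨0, by omega⟩ : Fin (2 + q)) = s0 q := by
    apply Fin.ext
    simp [s0, finSumFinEquiv]
  have h1 : (⟨1, by omega⟩ : Fin (2 + q)) = s1 q := by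
    apply Fin.ext
    simp [s1, finSumFinEquiv]
  rw [expVal_eq, h0, h1, WBW, entry_big, final_sum,
    show 2 + q - 2 = q from by omega]

end OneAxisTwisting
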